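/- Let w be a weight vector (w₁ ≥ … ≥ w_n > 0) and 1 ≤ k ≤ n. Every extreme point of the unit ball B = {x ∈ ℝⁿ : ‖x‖_{(k)}^w ≤ 1} of the weighted vector k-norm is of the form Σ_{i∈S} (±e_i)/(w₁+⋯+w_{min(k,|S|)}) for some subset S ⊆ {1,…,n} with 1 ≤ |S| ≤ k−1 or |S| = n. -/

import Mathlib

open Finset

noncomputable def dsort {n : ℕ} (x : Fin n → ℝ) : Fin n → ℝ :=
  fun i => |x (Tuple.sort (fun j => |x j|) i.rev)|

noncomputable def kNormW {n : ℕ} (w : Fin n → ℝ) (k : ℕ) (x : Fin n → ℝ) : ℝ :=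
  ∑ i : Fin n, if (i : ℕ) < k then w i * dsort x i else 0

namespace KAux
variable {n : ℕ}

lemma dsort_antitone (x : Fin n → ℝ) : Antitone (dsort x) := by
  intro i j hij
  have h := Tuple.monotone_sort (fun j => |x j|) (Fin.rev_le_rev.mpr hij)
  simpa [dsort] using h

lemma dsort_eq_of_antitone (x : Fin n → ℝ) (σ : Equiv.Perm (Fin n))
    (h : Antitone fun i => |x (σ i)|) : ∀ i, dsort x i = |x (σ i)| := by
  intro i
  set f : Fin n → ℝ := fun j => |x j| with hf
  have h1 : Monotone (f ∘ (Fin.revPerm.trans σ)) := by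
    intro a b hab
    exact h (Fin.rev_le_rev.mpr hab)
  have h2 := Tuple.unique_monotone h1 (Tuple.monotone_sort f)
  have h3 := congrFun h2 i.rev
  simp only [Function.comp, Equiv.trans_apply, Fin.revPerm_apply, Fin.rev_rev] at h3
  simpa [dsort, hf] using h3.symm

lemma dsort_apply_perm (x : Fin n → ℝ) :
    ∀ i, dsort x i = |x ((Fin.revPerm.trans (Tuple.sort fun j => |x j|)) i)| :=
  fun _ => rfl

lemma dsort_nonneg (x : Fin n → ℝ) (i : Fin n) : 0 ≤ dsort x i := abs_nonneg _

lemma le_dsort_zero (x : Fin n → ℝ) (j : Fin n) (h0 : (0:ℕ) < n) :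
    |x j| ≤ dsort x ⟨0, h0⟩ := by
  set τ : Equiv.Perm (Fin n) := Fin.revPerm.trans (Tuple.sort fun j => |x j|) with hτdef
  have h1 : |x j| = dsort x (τ.symm j) := by
    rw [dsort_apply_perm x (τ.symm j), ← hτdef, Equiv.apply_symm_apply]
  rw [h1]
  exact dsort_antitone x (Fin.mk_le_mk.mpr (Nat.zero_le _))

lemma dsort_ge_iff (x : Fin n → ℝ) (a : ℝ) (i : Fin n) :
    a ≤ dsort x i ↔ (i : ℕ) < (univ.filter fun j => a ≤ |x j|).card := by
  classical
  have h := Tuple.lt_card_ge_iff_apply_ge_of_antitone (f := dsort x) (a := a) (j := i) (dsort_antitone x)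
  rw [← h]
  have hcard : Fintype.card {j // a ≤ dsort x j} = (univ.filter fun j => a ≤ |x j|).card := by
    rw [Fintype.card_subtype]
    set τ : Equiv.Perm (Fin n) := Fin.revPerm.trans (Tuple.sort fun j => |x j|) with hτdef
    apply Finset.card_bij (fun i _ => τ i)
    · intro p hp; simp only [mem_filter, mem_univ, true_and] at hp ⊢
      exact hp
    · intro p _ q _ hpq; exact τ.injective hpq
    · intro q hq
      refine ⟨τ.symm q, ?_, by simp⟩
      simp only [mem_filter, mem_univ, true_and] at hq ⊢
      show a ≤ dsort x (τ.symm q)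
      rw [dsort_apply_perm x (τ.symm q), ← hτdef, Equiv.apply_symm_apply]; exact hq
  rw [← Fintype.card_subtype, hcard]

lemma kNormW_eq_of_antitone (w : Fin n → ℝ) (k : ℕ) (y : Fin n → ℝ) (σ : Equiv.Perm (Fin n))
    (h : Antitone fun i => |y (σ i)|) :
    kNormW w k y = ∑ i : Fin n, if (i : ℕ) < k then w i * |y (σ i)| else 0 := by
  unfold kNormW
  refine Finset.sum_congr rfl fun i _ => ?_
  rw [dsort_eq_of_antitone y σ h i]

lemma sum_split (k m : ℕ) (g : Fin n → ℝ) :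
    ∑ i : Fin n, (if (i:ℕ) < k then g i else 0)
    = (∑ i : Fin n, (if (i:ℕ) < min k m then g i else 0))
    + ∑ i : Fin n, (if m ≤ (i:ℕ) ∧ (i:ℕ) < k then g i else 0) := by
  rw [← Finset.sum_add_distrib]
  refine Finset.sum_congr rfl fun i _ => ?_
  simp only [min_def]
  split_ifs <;> (try ring) <;> (exfalso; omega)

/-- dsort of a vector taking values 0 and ±a. -/
lemma dsort_two_valued (y : Fin n → ℝ) (a : ℝ) (ha : 0 < a)
    (hval : ∀ j, y j = 0 ∨ |y j| = a) (i : Fin n) :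
    dsort y i = if (i:ℕ) < (univ.filter fun j => y j ≠ 0).card then a else 0 := by
  classical
  have hfe : (univ.filter fun j => a ≤ |y j|) = (univ.filter fun j => y j ≠ 0) := by
    refine Finset.filter_congr fun j _ => ?_
    rcases hval j with h | h
    · simp [h, not_le.mpr ha]
    · constructor
      · intro h2 h3; rw [h3] at h; simp at h; linarith
      · intro _; rw [h]
  have hiff := dsort_ge_iff y a i
  rw [hfe] at hiff
  have hmem : dsort y i = 0 ∨ dsort y i = a := by
    rw [dsort_apply_perm y i]
    rcases hval ((Fin.revPerm.trans (Tuple.sort fun j => |y j|)) i) with h | h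
    · left; rw [h]; simp
    · right; exact h
  split_ifs with h
  · have h2 := hiff.mpr h
    rcases hmem with h3 | h3
    · exfalso; rw [h3] at h2; linarith
    · exact h3
  · have h2 : ¬ a ≤ dsort y i := fun hc => h (hiff.mp hc)
    rcases hmem with h3 | h3
    · exact h3
    · exfalso; rw [h3] at h2; exact h2 le_rfl

lemma kNormW_two_valued (w : Fin n → ℝ) (k : ℕ) (y : Fin n → ℝ) (a : ℝ) (ha : 0 < a)
    (hval : ∀ j, y j = 0 ∨ |y j| = a) :
    kNormW w k y
      = a * ∑ i : Fin n, (if (i:ℕ) < min k (univ.filter fun j => y j ≠ 0).card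
          then w i else 0) := by
  classical
  unfold kNormW
  rw [Finset.mul_sum]
  refine Finset.sum_congr rfl fun i _ => ?_
  rw [dsort_two_valued y a ha hval i]
  simp only [min_def]
  split_ifs <;> (try ring) <;> (exfalso; omega)

lemma kNormW_smul (w : Fin n → ℝ) (k : ℕ) (y : Fin n → ℝ) (c : ℝ) (hc : 0 ≤ c) :
    kNormW w k (c • y) = c * kNormW w k y := by
  set τ : Equiv.Perm (Fin n) := Fin.revPerm.trans (Tuple.sort fun j => |y j|) with hτdef
  have hanti : Antitone fun i => |(c • y) (τ i)| := by
    intro i j hij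
    show |c * y (τ j)| ≤ |c * y (τ i)|
    rw [abs_mul, abs_mul, abs_of_nonneg hc]
    exact mul_le_mul_of_nonneg_left (dsort_antitone y hij) hc
  rw [kNormW_eq_of_antitone w k (c • y) τ hanti]
  unfold kNormW
  rw [Finset.mul_sum]
  refine Finset.sum_congr rfl fun i _ => ?_
  have h4 : |(c • y) (τ i)| = c * dsort y i := by
    show |c * y (τ i)| = c * dsort y i
    rw [abs_mul, abs_of_nonneg hc]; rfl
  rw [h4]
  split_ifs <;> ring

lemma kNormW_neg (w : Fin n → ℝ) (k : ℕ) (y : Fin n → ℝ) : kNormW w k (-y) = kNormW w k y := by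
  obtain ⟨τ, hτ⟩ : ∃ τ : Equiv.Perm (Fin n), ∀ i, dsort y i = |y (τ i)| := ⟨_, dsort_apply_perm y⟩
  have hanti : Antitone fun i => |(-y) (τ i)| := by
    intro i j hij
    show |-(y (τ j))| ≤ |-(y (τ i))|
    rw [abs_neg, abs_neg, ← hτ i, ← hτ j]
    exact dsort_antitone y hij
  rw [kNormW_eq_of_antitone w k (-y) τ hanti]
  unfold kNormW
  refine Finset.sum_congr rfl fun i _ => ?_
  have h5 : |(-y) (τ i)| = dsort y i := by
    show |-(y (τ i))| = _
    rw [abs_neg, hτ i]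
  rw [h5]

end KAux
set_option maxHeartbeats 3200000 in
theorem extreme_points_weighted_k_norm_ball {n : ℕ} (w : Fin n → ℝ)
    (hw_mono : ∀ i j : Fin n, i ≤ j → w j ≤ w i) (hw_pos : ∀ i, 0 < w i)
    (k : ℕ) (hk1 : 1 ≤ k) (hkn : k ≤ n)
    (x : Fin n → ℝ)
    (hx : x ∈ Set.extremePoints ℝ {y : Fin n → ℝ | kNormW w k y ≤ 1}) :
    ∃ (S : Finset (Fin n)) (ε : Fin n → ℝ),
      (∀ i, ε i = 1 ∨ ε i = -1) ∧
      ((1 ≤ S.card ∧ S.card ≤ k - 1) ∨ S.card = n) ∧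
      x = fun i =>
        if i ∈ S then ε i / (∑ j : Fin n, if (j : ℕ) < min k S.card then w j else 0)
        else 0 := by
  classical
  have hn : 0 < n := lt_of_lt_of_le hk1 hkn
  obtain ⟨hxB, hxe⟩ := hx
  simp only [Set.mem_setOf_eq] at hxB
  set z : Fin n := ⟨0, hn⟩ with hz_def
  -- key perturbation principle
  have key : ∀ d : Fin n → ℝ, kNormW w k (x + d) ≤ 1 → kNormW w k (x - d) ≤ 1 → d = 0 := by
    intro d h1 h2
    have hseg : x ∈ openSegment ℝ (x + d) (x - d) := by
      refine ⟨1/2, 1/2, by norm_num, by norm_num, by norm_num, ?_⟩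
      funext j
      simp only [Pi.smul_apply, Pi.add_apply, Pi.sub_apply, smul_eq_mul]
      ring
    have h1' : (x + d) ∈ {y : Fin n → ℝ | kNormW w k y ≤ 1} := h1
    have h2' : (x - d) ∈ {y : Fin n → ℝ | kNormW w k y ≤ 1} := h2
    have h3 := (hxe h1' h2' hseg)
    funext j
    have h4 := congrFun h3 j
    simp only [Pi.add_apply] at h4
    simpa using h4
  -- Step 1 : x ≠ 0
  have hx0 : x ≠ 0 := by
    intro h0
    have hwz := hw_pos z
    set c : ℝ := 1 / w z with hc_def
    have hc : 0 < c := by positivity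
    set u : Fin n → ℝ := fun i => if i = z then c else 0 with hu_def
    have hval : ∀ j, u j = 0 ∨ |u j| = c := by
      intro j
      by_cases h : j = z
      · right; simp [hu_def, h, abs_of_pos hc]
      · left; simp [hu_def, h]
    have hcard : (univ.filter fun j => u j ≠ 0).card = 1 := by
      have hfz : (univ.filter fun j => u j ≠ 0) = {z} := by
        ext j
        simp only [mem_filter, mem_univ, true_and, Finset.mem_singleton, hu_def]
        by_cases h : j = z
        · simp [h]; exact ne_of_gt hc
        · simp [h]
      rw [hfz, Finset.card_singleton]
    have hnorm : kNormW w k u = 1 := by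
      rw [KAux.kNormW_two_valued w k u c hc hval, hcard]
      have hmin : min k 1 = 1 := by omega
      rw [hmin]
      have hsum : (∑ i : Fin n, if (i:ℕ) < 1 then w i else 0) = w z := by
        rw [Finset.sum_eq_single z]
        · simp [hz_def]
        · intro i _ hne
          have hiv : (i:ℕ) ≠ 0 := fun h => hne (Fin.ext (by simp [h, hz_def]))
          rw [if_neg (by omega)]
        · intro h; exact absurd (Finset.mem_univ z) h
      rw [hsum, hc_def]
      field_simp
    have h1 : kNormW w k (x + u) ≤ 1 := by
      rw [h0, zero_add]; exact le_of_eq hnorm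
    have h2 : kNormW w k (x - u) ≤ 1 := by
      rw [h0, zero_sub, KAux.kNormW_neg]; exact le_of_eq hnorm
    have hu0 := key u h1 h2
    have := congrFun hu0 z
    simp [hu_def] at this
    exact absurd this (ne_of_gt hc)
  obtain ⟨j0, hj0⟩ : ∃ j, x j ≠ 0 := by
    by_contra hc
    push_neg at hc
    exact hx0 (funext fun j => hc j)
  set a : ℝ := dsort x z with ha_def
  have hmax : ∀ j, |x j| ≤ a := fun j => KAux.le_dsort_zero x j hn
  have ha : 0 < a := lt_of_lt_of_le (abs_pos.mpr hj0) (hmax j0)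
  have hdle : ∀ i, dsort x i ≤ a := by
    intro i
    exact KAux.dsort_antitone x (show z ≤ i from Fin.mk_le_mk.mpr (Nat.zero_le _))
  -- Step 2 : the norm equals 1
  have hN1 : kNormW w k x = 1 := by
    rcases eq_or_lt_of_le hxB with h | hlt
    · exact h
    exfalso
    set N : ℝ := kNormW w k x with hNdef
    have hN_pos : 0 < N := by
      rw [hNdef]
      unfold kNormW
      have hterm : ∀ i ∈ (univ : Finset (Fin n)), 0 ≤ (if (i:ℕ) < k then w i * dsort x i else 0) := by
        intro i _
        split_ifs
        · exact mul_nonneg (le_of_lt (hw_pos i)) (KAux.dsort_nonneg x i)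
        · exact le_rfl
      refine Finset.sum_pos' hterm ⟨z, Finset.mem_univ z, ?_⟩
      have hzv : ((z : Fin n) : ℕ) = 0 := rfl
      rw [if_pos (by omega), ← ha_def]
      exact mul_pos (hw_pos z) ha
    set t : ℝ := min 1 ((1 - N)/N) with ht_def
    have htpos : 0 < t := lt_min one_pos (div_pos (by linarith) hN_pos)
    have ht1 : t ≤ 1 := min_le_left _ _
    have ht2 : t * N ≤ 1 - N := by
      have h2 : t ≤ (1-N)/N := min_le_right _ _
      calc t * N ≤ ((1-N)/N) * N := by nlinarith
        _ = 1 - N := by field_simp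
    have hplus : kNormW w k (x + t • x) ≤ 1 := by
      have he : x + t • x = (1 + t) • x := by
        funext j; simp only [Pi.add_apply, Pi.smul_apply, smul_eq_mul]; ring
      rw [he, KAux.kNormW_smul w k x (1+t) (by linarith), ← hNdef]
      nlinarith
    have hminus : kNormW w k (x - t • x) ≤ 1 := by
      have he : x - t • x = (1 - t) • x := by
        funext j; simp only [Pi.sub_apply, Pi.smul_apply, smul_eq_mul]; ring
      rw [he, KAux.kNormW_smul w k x (1-t) (by linarith), ← hNdef]
      nlinarith
    have hzero := key (t • x) hplus hminus
    rcases smul_eq_zero.mp hzero with h | h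
    · linarith [h ▸ htpos]
    · exact hx0 h
  -- Step 3 : all nonzero coordinates have the same absolute value a
  have hall : ∀ i, x i ≠ 0 → |x i| = a := by
    by_contra hbad
    push_neg at hbad
    obtain ⟨i0, hi0ne, hi0a⟩ := hbad
    have hi0lt : |x i0| < a := lt_of_le_of_ne (hmax i0) hi0a
    set m₁ : ℕ := (univ.filter fun j => a ≤ |x j|).card with hm1_def
    have hseg : ∀ i : Fin n, a ≤ dsort x i ↔ (i:ℕ) < m₁ := fun i => KAux.dsort_ge_iff x a i
    have hm1pos : 0 < m₁ := by
      have h1 : a ≤ dsort x z := le_of_eq ha_def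
      have h2 := (hseg z).mp h1
      omega
    have hm1n : m₁ < n := by
      have hss : (univ.filter fun j => a ≤ |x j|) ⊂ univ := by
        refine (Finset.ssubset_iff_of_subset (Finset.filter_subset _ _)).mpr ?_
        exact ⟨i0, Finset.mem_univ i0, by simp [not_le.mpr hi0lt]⟩
      have h3 := Finset.card_lt_card hss
      simpa using h3
    set M : Fin n := ⟨m₁, hm1n⟩ with hM_def
    set b : ℝ := dsort x M with hb_def
    have hb0 : 0 ≤ b := KAux.dsort_nonneg x M
    have hba : b < a := by
      by_contra hcc
      push_neg at hcc
      have h4 := (hseg M).mp (by rw [← hb_def]; exact hcc)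
      simp [hM_def] at h4
    set A : ℝ := ∑ i : Fin n, (if (i:ℕ) < min k m₁ then w i else 0) with hA_def
    set B : ℝ := ∑ i : Fin n, (if m₁ ≤ (i:ℕ) ∧ (i:ℕ) < k then w i * dsort x i else 0) with hB_def
    have hA : 0 < A := by
      rw [hA_def]
      refine Finset.sum_pos' (fun i _ => by split_ifs; exacts [le_of_lt (hw_pos i), le_rfl])
        ⟨z, Finset.mem_univ z, ?_⟩
      have hzv : ((z : Fin n):ℕ) = 0 := rfl
      rw [if_pos (by omega)]
      exact hw_pos z
    have hBnn : 0 ≤ B := by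
      rw [hB_def]
      refine Finset.sum_nonneg fun i _ => ?_
      split_ifs
      · exact mul_nonneg (le_of_lt (hw_pos i)) (KAux.dsort_nonneg x i)
      · exact le_rfl
    have hdseg : ∀ i : Fin n, (i:ℕ) < m₁ → dsort x i = a := fun i hi =>
      le_antisymm (hdle i) ((hseg i).mpr hi)
    have hdlt : ∀ i : Fin n, ¬ (i:ℕ) < m₁ → dsort x i < a := by
      intro i hi
      refine lt_of_le_of_ne (hdle i) fun h => hi ((hseg i).mp (le_of_eq h.symm))
    have hdecomp : A * a + B = 1 := by
      have h1 := KAux.sum_split (n := n) k m₁ (fun i => w i * dsort x i)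
      have hfirst : (∑ i : Fin n, if (i:ℕ) < min k m₁ then w i * dsort x i else 0) = A * a := by
        rw [hA_def, Finset.sum_mul]
        refine Finset.sum_congr rfl fun i _ => ?_
        split_ifs with h
        · rw [hdseg i (lt_of_lt_of_le h (min_le_right _ _))]
        · ring
      rw [← hN1]
      unfold kNormW
      rw [h1, hfirst, ← hB_def]
    obtain ⟨τ, hτ⟩ : ∃ τ : Equiv.Perm (Fin n), ∀ i, dsort x i = |x (τ i)| :=
      ⟨_, KAux.dsort_apply_perm x⟩
    set d : Fin n → ℝ := fun i => if |x i| = a then B * x i else -(A*a) * x i with hd_def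
    have hdv : ∀ j, d j = if |x j| = a then B * x j else -(A*a) * x j := fun j => by rw [hd_def]
    have hd0 : d ≠ 0 := by
      intro h
      have h2 := congrFun h i0
      rw [hdv i0, if_neg hi0a, Pi.zero_apply] at h2
      exact mul_ne_zero (neg_ne_zero.mpr (ne_of_gt (mul_pos hA ha))) hi0ne h2
    have hpert : ∀ s : ℝ, 0 ≤ 1 + s*B → 0 ≤ 1 - s*(A*a) → (1 - s*(A*a))*b ≤ (1 + s*B)*a →
        kNormW w k (x + s • d) ≤ 1 := by
      intro s hs1 hs2 hs3
      set v : Fin n → ℝ := fun i => if (i:ℕ) < m₁ then (1 + s*B)*a else (1 - s*(A*a)) * dsort x i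
        with hv_def
      have hvv : ∀ i, v i = if (i:ℕ) < m₁ then (1 + s*B)*a else (1 - s*(A*a)) * dsort x i :=
        fun i => by rw [hv_def]
      have hxv : ∀ i, |(x + s • d) (τ i)| = v i := by
        intro i
        by_cases hi : (i:ℕ) < m₁
        · have hxa : |x (τ i)| = a := by rw [← hτ i]; exact hdseg i hi
          have he : (x + s • d) (τ i) = (1 + s*B) * x (τ i) := by
            simp only [Pi.add_apply, Pi.smul_apply, smul_eq_mul, hdv (τ i), if_pos hxa]
            ring
          rw [he, abs_mul, abs_of_nonneg hs1, hxa, hvv i, if_pos hi]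
        · have hxa : |x (τ i)| ≠ a := by rw [← hτ i]; exact ne_of_lt (hdlt i hi)
          have he : (x + s • d) (τ i) = (1 - s*(A*a)) * x (τ i) := by
            simp only [Pi.add_apply, Pi.smul_apply, smul_eq_mul, hdv (τ i), if_neg hxa]
            ring
          rw [he, abs_mul, abs_of_nonneg hs2, hvv i, if_neg hi, hτ i]
      have hvanti : Antitone v := by
        intro i j hij
        have hijv : (i:ℕ) ≤ (j:ℕ) := hij
        by_cases hi : (i:ℕ) < m₁ <;> by_cases hj : (j:ℕ) < m₁
        · rw [hvv i, hvv j, if_pos hi, if_pos hj]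
        · rw [hvv i, hvv j, if_pos hi, if_neg hj]
          have h1 : dsort x j ≤ b := by
            rw [hb_def]
            exact KAux.dsort_antitone x (show M ≤ j from Fin.le_def.mpr (by simp [hM_def]; omega))
          calc (1 - s*(A*a)) * dsort x j ≤ (1 - s*(A*a)) * b := mul_le_mul_of_nonneg_left h1 hs2
            _ ≤ (1 + s*B)*a := hs3
        · omega
        · rw [hvv i, hvv j, if_neg hi, if_neg hj]
          exact mul_le_mul_of_nonneg_left (KAux.dsort_antitone x hij) hs2
      have hanti2 : Antitone fun i => |(x + s • d) (τ i)| := by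
        have he : (fun i => |(x + s • d) (τ i)|) = v := funext hxv
        rw [he]; exact hvanti
      have hnorm : kNormW w k (x + s • d) = 1 := by
        rw [KAux.kNormW_eq_of_antitone w k (x + s • d) τ hanti2]
        have hcong : (∑ i : Fin n, if (i:ℕ) < k then w i * |(x + s • d) (τ i)| else 0)
            = ∑ i : Fin n, if (i:ℕ) < k then w i * v i else 0 := by
          refine Finset.sum_congr rfl fun i _ => ?_
          rw [hxv i]
        rw [hcong, KAux.sum_split (n := n) k m₁ (fun i => w i * v i)]
        have hf : (∑ i : Fin n, if (i:ℕ) < min k m₁ then w i * v i else 0)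
            = ((1 + s*B)*a) * A := by
          have hterm : ∀ i : Fin n, (if (i:ℕ) < min k m₁ then w i * v i else 0)
              = ((1 + s*B)*a) * (if (i:ℕ) < min k m₁ then w i else 0) := by
            intro i
            split_ifs with h
            · rw [hvv i, if_pos (lt_of_lt_of_le h (min_le_right _ _))]; ring
            · ring
          rw [Finset.sum_congr rfl (fun i _ => hterm i), ← Finset.mul_sum, ← hA_def]
        have hg : (∑ i : Fin n, if m₁ ≤ (i:ℕ) ∧ (i:ℕ) < k then w i * v i else 0)
            = (1 - s*(A*a)) * B := by
          have hterm : ∀ i : Fin n, (if m₁ ≤ (i:ℕ) ∧ (i:ℕ) < k then w i * v i else 0)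
              = (1 - s*(A*a)) * (if m₁ ≤ (i:ℕ) ∧ (i:ℕ) < k then w i * dsort x i else 0) := by
            intro i
            split_ifs with h
            · rw [hvv i, if_neg (by omega)]; ring
            · ring
          rw [Finset.sum_congr rfl (fun i _ => hterm i), ← Finset.mul_sum, ← hB_def]
        rw [hf, hg]
        linear_combination hdecomp
      exact le_of_eq hnorm
    set c : ℝ := A*a + B + 1 with hc_def
    have hAa : 0 < A*a := mul_pos hA ha
    have hc : 0 < c := by rw [hc_def]; linarith
    set t : ℝ := min (1/c) ((a-b)/(c*(a+b+1))) with ht_def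
    have ht : 0 < t := lt_min (by positivity) (div_pos (by linarith) (by positivity))
    have htc1 : t * c ≤ 1 := by
      have h1 : t ≤ 1/c := min_le_left _ _
      calc t * c ≤ (1/c) * c := mul_le_mul_of_nonneg_right h1 hc.le
        _ = 1 := one_div_mul_cancel (ne_of_gt hc)
    have htc2 : t * (c*(a+b+1)) ≤ a - b := by
      have h1 : t ≤ (a-b)/(c*(a+b+1)) := min_le_right _ _
      have h2 : 0 < c*(a+b+1) := by positivity
      calc t * (c*(a+b+1)) ≤ ((a-b)/(c*(a+b+1))) * (c*(a+b+1)) :=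
            mul_le_mul_of_nonneg_right h1 h2.le
        _ = a - b := div_mul_cancel₀ _ (ne_of_gt h2)
    have hBc : B ≤ c := by rw [hc_def]; linarith
    have hAac : A*a ≤ c := by rw [hc_def]; linarith
    have htB : t*B ≤ 1 := le_trans (mul_le_mul_of_nonneg_left hBc ht.le) htc1
    have htAa : t*(A*a) ≤ 1 := le_trans (mul_le_mul_of_nonneg_left hAac ht.le) htc1
    have htBnn : 0 ≤ t*B := mul_nonneg ht.le hBnn
    have htAann : 0 ≤ t*(A*a) := mul_nonneg ht.le hAa.le
    have hsum : (A*a)*b + B*a ≤ c*(a+b+1) := by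
      have e1 : (A*a)*b ≤ c*b := mul_le_mul_of_nonneg_right hAac hb0
      have e2 : B*a ≤ c*a := mul_le_mul_of_nonneg_right hBc ha.le
      linarith [hc.le]
    have hkey : t*((A*a)*b + B*a) ≤ a - b := by
      calc t*((A*a)*b + B*a) ≤ t*(c*(a+b+1)) :=
            mul_le_mul_of_nonneg_left hsum ht.le
        _ ≤ a - b := htc2
    have hp := hpert t (by linarith) (by linarith)
      (by linarith [mul_nonneg htAann hb0, mul_nonneg htBnn ha.le])
    have hm' := hpert (-t) (by linarith) (by linarith [htAann]) (by linarith [hkey])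
    have hxm : x - t • d = x + (-t) • d := by
      funext j
      simp only [Pi.sub_apply, Pi.add_apply, Pi.smul_apply, smul_eq_mul]
      ring
    have hz' := key (t • d) hp (by rw [hxm]; exact hm')
    rcases smul_eq_zero.mp hz' with h | h
    · exact absurd h (ne_of_gt ht)
    · exact hd0 h
  -- Step 4/5 : conclusion
  set S : Finset (Fin n) := univ.filter (fun i => x i ≠ 0) with hS_def
  have hval : ∀ j, x j = 0 ∨ |x j| = a := by
    intro j
    by_cases h : x j = 0
    · exact Or.inl h
    · exact Or.inr (hall j h)
  have hm1 : 1 ≤ S.card := Finset.card_pos.mpr ⟨j0, by simp [hS_def, hj0]⟩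
  have hmn : S.card ≤ n := le_trans (Finset.card_le_univ S) (by simp)
  have hWpos : 0 < ∑ j : Fin n, (if (j:ℕ) < min k S.card then w j else 0) := by
    refine Finset.sum_pos' (fun i _ => by split_ifs; exacts [(hw_pos i).le, le_rfl])
      ⟨z, Finset.mem_univ z, ?_⟩
    have hzv : ((z : Fin n):ℕ) = 0 := rfl
    rw [if_pos (by omega)]
    exact hw_pos z
  have haW : a * (∑ j : Fin n, if (j:ℕ) < min k S.card then w j else 0) = 1 := by
    rw [← hN1, KAux.kNormW_two_valued w k x a ha hval, ← hS_def]
  have hcase : S.card ≤ k - 1 ∨ S.card = n := by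
    by_contra hcon
    push_neg at hcon
    obtain ⟨h1, h2⟩ := hcon
    have hkm : k ≤ S.card := by omega
    have hmn' : S.card < n := lt_of_le_of_ne hmn h2
    obtain ⟨j1, hj1⟩ : ∃ j, j ∉ S := by
      by_contra hcc
      push_neg at hcc
      have he : S = univ := Finset.eq_univ_iff_forall.mpr hcc
      rw [he] at hmn'
      simp at hmn'
    have hxj1 : x j1 = 0 := by
      by_contra hcc
      exact hj1 (by simp [hS_def, hcc])
    set e : Fin n → ℝ := fun i => if i = j1 then a else 0 with he_def
    have hev : ∀ j, e j = if j = j1 then a else 0 := fun j => by rw [he_def]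
    have hminx : min k S.card = k := by omega
    have hminp : min k (S.card + 1) = k := by omega
    have hnx : kNormW w k x = a * ∑ j : Fin n, (if (j:ℕ) < k then w j else 0) := by
      rw [KAux.kNormW_two_valued w k x a ha hval, ← hS_def, hminx]
    have hvalp : ∀ j, (x + e) j = 0 ∨ |(x + e) j| = a := by
      intro j
      by_cases h : j = j1
      · subst h
        right
        rw [Pi.add_apply, hev j, if_pos rfl, hxj1, zero_add]
        exact abs_of_pos ha
      · rw [Pi.add_apply, hev j, if_neg h, add_zero]
        exact hval j
    have hvalm : ∀ j, (x - e) j = 0 ∨ |(x - e) j| = a := by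
      intro j
      by_cases h : j = j1
      · subst h
        right
        rw [Pi.sub_apply, hev j, if_pos rfl, hxj1, zero_sub, abs_neg]
        exact abs_of_pos ha
      · rw [Pi.sub_apply, hev j, if_neg h, sub_zero]
        exact hval j
    have hcardp : (univ.filter fun j => (x + e) j ≠ 0) = insert j1 S := by
      ext j
      simp only [mem_filter, mem_univ, true_and, Finset.mem_insert]
      by_cases h : j = j1
      · subst h
        rw [Pi.add_apply, hev j, if_pos rfl, hxj1, zero_add]
        simp [ne_of_gt ha]
      · rw [Pi.add_apply, hev j, if_neg h, add_zero]
        simp [hS_def, h]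
    have hcardm : (univ.filter fun j => (x - e) j ≠ 0) = insert j1 S := by
      ext j
      simp only [mem_filter, mem_univ, true_and, Finset.mem_insert]
      by_cases h : j = j1
      · subst h
        rw [Pi.sub_apply, hev j, if_pos rfl, hxj1, zero_sub]
        simp [ne_of_gt ha]
      · rw [Pi.sub_apply, hev j, if_neg h, sub_zero]
        simp [hS_def, h]
    have hnp : kNormW w k (x + e) ≤ 1 := by
      rw [KAux.kNormW_two_valued w k (x + e) a ha hvalp, hcardp,
        Finset.card_insert_of_notMem hj1, hminp, ← hnx, hN1]
    have hnm : kNormW w k (x - e) ≤ 1 := by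
      rw [KAux.kNormW_two_valued w k (x - e) a ha hvalm, hcardm,
        Finset.card_insert_of_notMem hj1, hminp, ← hnx, hN1]
    have he0 := key e hnp hnm
    have hce := congrFun he0 j1
    rw [hev j1, if_pos rfl, Pi.zero_apply] at hce
    exact ne_of_gt ha hce
  refine ⟨S, fun i => if x i < 0 then -1 else 1, ?_, ?_, ?_⟩
  · intro i
    by_cases h : x i < 0 <;> simp [h]
  · rcases hcase with h | h
    · exact Or.inl ⟨hm1, h⟩
    · exact Or.inr h
  · funext i
    by_cases h : i ∈ S
    · rw [if_pos h]
      have hxi : x i ≠ 0 := by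
        have := h
        rw [hS_def, mem_filter] at this
        exact this.2
      have hxa : |x i| = a := hall i hxi
      set W : ℝ := ∑ j : Fin n, (if (j:ℕ) < min k S.card then w j else 0) with hW_def
      have haW' : a = 1 / W := by
        rw [eq_div_iff (ne_of_gt hWpos)]
        exact haW
      show x i = (if x i < 0 then -1 else 1) / W
      by_cases hneg : x i < 0
      · rw [if_pos hneg]
        have hxv : x i = -a := by
          rw [← hxa, abs_of_neg hneg]
          ring
        rw [hxv, haW']
        ring
      · rw [if_neg hneg]
        have hxv : x i = a := by
          rw [← hxa, abs_of_nonneg (not_lt.mp hneg)]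
        rw [hxv, haW']
    · rw [if_neg h]
      by_contra hcc
      exact h (by simp [hS_def, hcc])
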